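/- Any d-minimal triangle T is G-equivalent to a translate of the standard triangle T₁ = Conv((0,0), (1/d,0), (0,1/d)) by a vector in the lattice (1/d)Z × (1/d)Z; moreover the translate may be chosen to lie in the unit square [0,1]². -/

import Mathlib

noncomputable section

/-- The lattice `(1/d)ℤ × (1/d)ℤ` inside `ℝ × ℝ`. -/
def Ld (d : ℕ) : Set (ℝ × ℝ) :=
  {p | ∃ a b : ℤ, p = ((a : ℝ) / d, (b : ℝ) / d)}

/-- A `d`-minimal triangle: vertices in `L_d`, not collinear, and the closed triangle
meets `L_d` exactly in its three vertices. -/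
def IsMinimalTriangle (d : ℕ) (p q r : ℝ × ℝ) : Prop :=
  p ∈ Ld d ∧ q ∈ Ld d ∧ r ∈ Ld d ∧
    ¬ Collinear ℝ ({p, q, r} : Set (ℝ × ℝ)) ∧
    convexHull ℝ ({p, q, r} : Set (ℝ × ℝ)) ∩ Ld d = {p, q, r}

/-- An element of `G = GL₂(ℤ) ⋉ ℤ²`: an integer matrix `[[a,b],[c,e]]` of determinant
`±1` together with an integer translation vector `(v1, v2)`. -/
structure GMap where
  a : ℤ
  b : ℤ
  c : ℤ
  e : ℤ
  v1 : ℤ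
  v2 : ℤ
  unimod : a * e - b * c = 1 ∨ a * e - b * c = -1

/-- The affine action `x ↦ Ux + v` of a `GMap` on `ℝ²`. -/
def GMap.app (g : GMap) (p : ℝ × ℝ) : ℝ × ℝ :=
  ((g.a : ℝ) * p.1 + (g.b : ℝ) * p.2 + (g.v1 : ℝ),
   (g.c : ℝ) * p.1 + (g.e : ℝ) * p.2 + (g.v2 : ℝ))

/-- A `d`-minimal segment: endpoints in `L_d`, distinct, and the closed segment meets
`L_d` exactly in its two endpoints. -/
def IsMinimalSegment (d : ℕ) (p q : ℝ × ℝ) : Prop :=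
  p ∈ Ld d ∧ q ∈ Ld d ∧ p ≠ q ∧ segment ℝ p q ∩ Ld d = {p, q}

/-- The point of `L_d` with integer numerator data `p : ℤ × ℤ`. -/
def pt (d : ℕ) (p : ℤ × ℤ) : ℝ × ℝ := ((p.1 : ℝ) / d, (p.2 : ℝ) / d)

/-- Counterclockwise orientation of the ordered triple of numerator data. -/
def ccwZ (p q r : ℤ × ℤ) : Prop :=
  0 < (q.1 - p.1) * (r.2 - p.2) - (q.2 - p.2) * (r.1 - p.1)

/-- Weight (mod `d`) of the oriented minimal segment from `(w/d, x/d)` to `(y/d, z/d)`,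
given by numerator data `(w,x)` and `(y,z)`. -/
def segWeight (d : ℕ) (p q : ℤ × ℤ) : ZMod d :=
  ((p.1 * q.2 - p.2 * q.1 : ℤ) : ZMod d)

/-- The multiset of weights of the three edges `p→q`, `q→r`, `r→p` of a triangle
given by numerator data. -/
def triWeight (d : ℕ) (p q r : ℤ × ℤ) : Multiset (ZMod d) :=
  {segWeight d p q, segWeight d q r, segWeight d r p}

/-- The standard `d`-minimal triangle `T₁ = Conv((0,0), (1/d,0), (0,1/d))`. -/
def T1 (d : ℕ) : Set (ℝ × ℝ) :=
  convexHull ℝ ({((0 : ℝ), (0 : ℝ)), ((1 : ℝ) / d, 0), (0, (1 : ℝ) / d)} : Set (ℝ × ℝ))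


/-! ### Auxiliary lemmas -/

section Aux

lemma pt_mem_Ld (d : ℕ) (z : ℤ × ℤ) : pt d z ∈ Ld d := ⟨z.1, z.2, rfl⟩

lemma pt_inj {d : ℕ} (hd : 0 < d) {y z : ℤ × ℤ} (h : pt d y = pt d z) : y = z := by
  have hdr : (d : ℝ) ≠ 0 := Nat.cast_ne_zero.2 hd.ne'
  rw [pt, pt, Prod.ext_iff] at h
  obtain ⟨h1, h2⟩ := h
  rw [div_eq_div_iff hdr hdr] at h1 h2
  have e1 : y.1 = z.1 := by
    have := mul_right_cancel₀ hdr h1; exact_mod_cast this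
  have e2 : y.2 = z.2 := by
    have := mul_right_cancel₀ hdr h2; exact_mod_cast this
  exact Prod.ext e1 e2

lemma mem_conv3 {p q r : ℝ × ℝ} {a b : ℝ} (ha : 0 ≤ a) (hb : 0 ≤ b) (hab : a + b ≤ 1) :
    (1 - a - b) • p + a • q + b • r ∈ convexHull ℝ ({p, q, r} : Set (ℝ × ℝ)) := by
  have hsum : ∑ i : Fin 3, (![1 - a - b, a, b]) i = 1 := by
    simp [Fin.sum_univ_three]; ring
  have hmem := Finset.centerMass_mem_convexHull (s := ({p, q, r} : Set (ℝ × ℝ)))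
    (Finset.univ : Finset (Fin 3))
    (w := ![1 - a - b, a, b]) (z := ![p, q, r])
    (by intro i _; fin_cases i <;> simp <;> linarith)
    (by rw [hsum]; norm_num)
    (by intro i _; fin_cases i <;> simp [Set.mem_insert_iff])
  rwa [Finset.centerMass_eq_of_sum_1 _ _ hsum, Fin.sum_univ_three] at hmem

/-- If the integer determinant of the edge vectors vanishes, the triangle is collinear. -/
lemma collinear_of_det_zero {d : ℕ} (hd : 0 < d) (P u w : ℤ × ℤ)
    (hdet : u.1 * w.2 - u.2 * w.1 = 0) :
    Collinear ℝ ({pt d P, pt d (P + u), pt d (P + w)} : Set (ℝ × ℝ)) := by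
  have hdr : (d : ℝ) ≠ 0 := Nat.cast_ne_zero.2 hd.ne'
  have hdet' : (u.1 : ℝ) * w.2 = u.2 * w.1 := by
    have : (u.1 : ℝ) * w.2 - u.2 * w.1 = 0 := by exact_mod_cast hdet
    linarith
  rw [collinear_iff_of_mem (Set.mem_insert (pt d P) _)]
  by_cases hu1 : u.1 = 0
  · by_cases hu2 : u.2 = 0
    · -- u = 0
      refine ⟨((w.1 : ℝ) / d, (w.2 : ℝ) / d), ?_⟩
      intro x hx
      simp only [Set.mem_insert_iff, Set.mem_singleton_iff] at hx
      rcases hx with rfl | rfl | rfl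
      · exact ⟨0, by simp [pt]⟩
      · refine ⟨0, ?_⟩
        simp only [pt, vadd_eq_add, Prod.smul_mk, smul_eq_mul, Prod.mk_add_mk, Prod.ext_iff,
          Prod.fst_add, Prod.snd_add]
        push_cast [hu1, hu2]
        constructor <;> ring
      · refine ⟨1, ?_⟩
        simp only [pt, vadd_eq_add, Prod.smul_mk, smul_eq_mul, Prod.mk_add_mk, Prod.ext_iff,
          Prod.fst_add, Prod.snd_add]
        push_cast
        constructor <;> ring
    · -- u.1 = 0, u.2 ≠ 0, then w.1 = 0
      have hw1 : w.1 = 0 := by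
        have h0 : u.2 * w.1 = 0 := by
          have : u.1 * w.2 = u.2 * w.1 := by linarith
          rw [← this, hu1]; ring
        rcases mul_eq_zero.1 h0 with h | h
        · exact absurd h hu2
        · exact h
      refine ⟨((0 : ℝ), 1), ?_⟩
      intro x hx
      simp only [Set.mem_insert_iff, Set.mem_singleton_iff] at hx
      rcases hx with rfl | rfl | rfl
      · exact ⟨0, by simp [pt]⟩
      · refine ⟨(u.2 : ℝ) / d, ?_⟩
        simp only [pt, vadd_eq_add, Prod.smul_mk, smul_eq_mul, Prod.mk_add_mk, Prod.ext_iff,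
          Prod.fst_add, Prod.snd_add]
        push_cast [hu1]
        constructor <;> ring
      · refine ⟨(w.2 : ℝ) / d, ?_⟩
        simp only [pt, vadd_eq_add, Prod.smul_mk, smul_eq_mul, Prod.mk_add_mk, Prod.ext_iff,
          Prod.fst_add, Prod.snd_add]
        push_cast [hw1]
        constructor <;> ring
  · -- u.1 ≠ 0
    have hu1r : (u.1 : ℝ) ≠ 0 := Int.cast_ne_zero.2 hu1
    refine ⟨((u.1 : ℝ) / d, (u.2 : ℝ) / d), ?_⟩
    intro x hx
    simp only [Set.mem_insert_iff, Set.mem_singleton_iff] at hx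
    rcases hx with rfl | rfl | rfl
    · exact ⟨0, by simp [pt]⟩
    · refine ⟨1, ?_⟩
      simp only [pt, vadd_eq_add, Prod.smul_mk, smul_eq_mul, Prod.mk_add_mk, Prod.ext_iff,
        Prod.fst_add, Prod.snd_add]
      push_cast
      constructor <;> ring
    · refine ⟨(w.1 : ℝ) / u.1, ?_⟩
      simp only [pt, vadd_eq_add, Prod.smul_mk, smul_eq_mul, Prod.mk_add_mk, Prod.ext_iff,
        Prod.fst_add, Prod.snd_add]
      push_cast
      constructor
      · field_simp
        ring
      · field_simp
        linear_combination hdet'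

/-- Membership in the lattice generated by `u` and `w`. -/
def InLat (u w z : ℤ × ℤ) : Prop :=
  ∃ m n : ℤ, z = (m * u.1 + n * w.1, m * u.2 + n * w.2)

/-- Core lemma: a minimal triangle has unimodular edge vectors. -/
lemma det_unimodular {d : ℕ} (hd : 0 < d) (P u w : ℤ × ℤ)
    (hmin : convexHull ℝ ({pt d P, pt d (P + u), pt d (P + w)} : Set (ℝ × ℝ)) ∩ Ld d
      = {pt d P, pt d (P + u), pt d (P + w)})
    (hD : u.1 * w.2 - u.2 * w.1 ≠ 0) :
    u.1 * w.2 - u.2 * w.1 = 1 ∨ u.1 * w.2 - u.2 * w.1 = -1 := by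
  by_contra hcon
  push_neg at hcon
  obtain ⟨h1, h2⟩ := hcon
  set D : ℤ := u.1 * w.2 - u.2 * w.1 with hDdef
  -- some standard basis vector is not in the lattice generated by u, w
  have hz : ∃ z : ℤ × ℤ, ¬ InLat u w z := by
    by_contra hall
    push_neg at hall
    obtain ⟨m, n, hmn⟩ := hall ((1 : ℤ), (0 : ℤ))
    obtain ⟨m', n', hmn'⟩ := hall ((0 : ℤ), (1 : ℤ))
    rw [Prod.ext_iff] at hmn hmn'
    have key : (m * n' - n * m') * D = 1 := by
      have e1 := hmn.1; have e2 := hmn.2; have e3 := hmn'.1; have e4 := hmn'.2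
      simp only at e1 e2 e3 e4
      rw [hDdef]
      nlinarith [e1, e2, e3, e4]
    have : IsUnit D := IsUnit.of_mul_eq_one (a := D) (m * n' - n * m') (by linarith [key, mul_comm D (m * n' - n * m')])
    rcases Int.isUnit_iff.1 this with h | h
    · exact h1 h
    · exact h2 h
  obtain ⟨z, hz⟩ := hz
  have hDq : (D : ℚ) ≠ 0 := Int.cast_ne_zero.2 hD
  -- barycentric coordinates of z with respect to u, w
  set α : ℚ := (z.1 * w.2 - z.2 * w.1 : ℤ) / D with hαdef
  set β : ℚ := (u.1 * z.2 - u.2 * z.1 : ℤ) / D with hβdef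
  have hα1 : (z.1 : ℚ) = α * u.1 + β * w.1 := by
    rw [hαdef, hβdef]
    field_simp
    push_cast [hDdef]
    ring
  have hα2 : (z.2 : ℚ) = α * u.2 + β * w.2 := by
    rw [hαdef, hβdef]
    field_simp
    push_cast [hDdef]
    ring
  set M : ℤ := ⌊α⌋ with hM
  set N : ℤ := ⌊β⌋ with hN
  set α' : ℚ := α - M with hα'
  set β' : ℚ := β - N with hβ'
  have hα'0 : 0 ≤ α' := by rw [hα', hM]; linarith [Int.floor_le α]
  have hα'1 : α' < 1 := by rw [hα', hM]; linarith [Int.lt_floor_add_one α]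
  have hβ'0 : 0 ≤ β' := by rw [hβ', hN]; linarith [Int.floor_le β]
  have hβ'1 : β' < 1 := by rw [hβ', hN]; linarith [Int.lt_floor_add_one β]
  set z' : ℤ × ℤ := (z.1 - (M * u.1 + N * w.1), z.2 - (M * u.2 + N * w.2)) with hz'def
  have hz'1 : (z.1 : ℚ) - ((M : ℚ) * u.1 + (N : ℚ) * w.1) = α' * u.1 + β' * w.1 := by
    rw [hα', hβ']; linear_combination hα1
  have hz'2 : (z.2 : ℚ) - ((M : ℚ) * u.2 + (N : ℚ) * w.2) = α' * u.2 + β' * w.2 := by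
    rw [hα', hβ']; linear_combination hα2
  -- obtain a point c in the closed triangle (barycentric coords a b) not in the lattice
  have key : ∃ (c : ℤ × ℤ) (a b : ℚ), 0 ≤ a ∧ 0 ≤ b ∧ a + b ≤ 1 ∧
      (c.1 : ℚ) = a * u.1 + b * w.1 ∧ (c.2 : ℚ) = a * u.2 + b * w.2 ∧ ¬ InLat u w c := by
    by_cases hcase : α' + β' ≤ 1
    · refine ⟨z', α', β', hα'0, hβ'0, hcase, ?_, ?_, ?_⟩
      · show ((z.1 - (M * u.1 + N * w.1) : ℤ) : ℚ) = _
        push_cast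
        linear_combination hz'1
      · show ((z.2 - (M * u.2 + N * w.2) : ℤ) : ℚ) = _
        push_cast
        linear_combination hz'2
      rintro ⟨m, n, hmn⟩
      apply hz
      refine ⟨m + M, n + N, ?_⟩
      simp only [hz'def, Prod.mk.injEq] at hmn
      obtain ⟨e1, e2⟩ := hmn
      rw [Prod.ext_iff]
      constructor
      · show z.1 = _
        linear_combination e1
      · show z.2 = _
        linear_combination e2
    · push_neg at hcase
      refine ⟨(u.1 + w.1 - z'.1, u.2 + w.2 - z'.2), 1 - α', 1 - β',
        by linarith, by linarith, by linarith, ?_, ?_, ?_⟩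
      · show ((u.1 + w.1 - (z.1 - (M * u.1 + N * w.1)) : ℤ) : ℚ) = _
        push_cast
        linear_combination -hz'1
      · show ((u.2 + w.2 - (z.2 - (M * u.2 + N * w.2)) : ℤ) : ℚ) = _
        push_cast
        linear_combination -hz'2
      · rintro ⟨m, n, hmn⟩
        apply hz
        refine ⟨M + 1 - m, N + 1 - n, ?_⟩
        simp only [hz'def, Prod.mk.injEq] at hmn
        obtain ⟨e1, e2⟩ := hmn
        rw [Prod.ext_iff]
        constructor
        · show z.1 = _
          linear_combination -e1
        · show z.2 = _
          linear_combination -e2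
  obtain ⟨c, a, b, ha, hb, hab, hc1, hc2, hcΛ⟩ := key
  -- the real point s = pt d (P + c) lies in the closed triangle and in the lattice
  set s : ℝ × ℝ := pt d (P + c) with hsdef
  have hdr : (d : ℝ) ≠ 0 := Nat.cast_ne_zero.2 hd.ne'
  have hc1r : (c.1 : ℝ) = (a : ℝ) * u.1 + (b : ℝ) * w.1 := by exact_mod_cast congrArg (Rat.cast : ℚ → ℝ) hc1
  have hc2r : (c.2 : ℝ) = (a : ℝ) * u.2 + (b : ℝ) * w.2 := by exact_mod_cast congrArg (Rat.cast : ℚ → ℝ) hc2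
  have hs_eq : s = (1 - (a : ℝ) - (b : ℝ)) • pt d P + (a : ℝ) • pt d (P + u) + (b : ℝ) • pt d (P + w) := by
    rw [hsdef]
    simp only [pt, Prod.ext_iff, Prod.smul_mk, smul_eq_mul, Prod.mk_add_mk,
      Prod.fst_add, Prod.snd_add]
    push_cast
    constructor
    · field_simp
      linear_combination hc1r
    · field_simp
      linear_combination hc2r
  have haR : (0 : ℝ) ≤ (a : ℝ) := by exact_mod_cast ha
  have hbR : (0 : ℝ) ≤ (b : ℝ) := by exact_mod_cast hb
  have habR : (a : ℝ) + (b : ℝ) ≤ 1 := by exact_mod_cast hab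
  have hs_mem : s ∈ convexHull ℝ ({pt d P, pt d (P + u), pt d (P + w)} : Set (ℝ × ℝ)) := by
    rw [hs_eq]; exact mem_conv3 haR hbR habR
  have : s ∈ ({pt d P, pt d (P + u), pt d (P + w)} : Set (ℝ × ℝ)) := by
    rw [← hmin]; exact ⟨hs_mem, pt_mem_Ld d _⟩
  rcases this with h | h | h
  · have : P + c = P := pt_inj hd h
    have hc0 : c = 0 := by
      have := congrArg (· - P) this; simpa using this
    exact hcΛ ⟨0, 0, by rw [hc0]; simp; rfl⟩
  · have : P + c = P + u := pt_inj hd h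
    have hcu : c = u := by
      have := congrArg (· - P) this; simpa using this
    exact hcΛ ⟨1, 0, by rw [hcu]; simp⟩
  · have : P + c = P + w := pt_inj hd h
    have hcw : c = w := by
      have := congrArg (· - P) this; simpa using this
    exact hcΛ ⟨0, 1, by rw [hcw]; simp⟩

/-- The linear part of a `GMap` as a linear map. -/
def GMap.lin (g : GMap) : (ℝ × ℝ) →ₗ[ℝ] (ℝ × ℝ) where
  toFun p := ((g.a : ℝ) * p.1 + (g.b : ℝ) * p.2, (g.c : ℝ) * p.1 + (g.e : ℝ) * p.2)
  map_add' x y := by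
    simp only [Prod.fst_add, Prod.snd_add, Prod.mk_add_mk, Prod.ext_iff]
    constructor <;> ring
  map_smul' t x := by
    simp only [Prod.smul_fst, Prod.smul_snd, smul_eq_mul, RingHom.id_apply, Prod.smul_mk,
      Prod.ext_iff]
    constructor <;> ring

/-- A `GMap` as an affine map. -/
def GMap.aff (g : GMap) : (ℝ × ℝ) →ᵃ[ℝ] (ℝ × ℝ) where
  toFun := g.app
  linear := g.lin
  map_vadd' p v := by
    simp only [GMap.app, GMap.lin, vadd_eq_add, Prod.fst_add, Prod.snd_add,
      LinearMap.coe_mk, AddHom.coe_mk, Prod.mk_add_mk, Prod.ext_iff]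
    constructor <;> ring

lemma gmap_app_eq_aff (g : GMap) : g.app = ⇑g.aff := rfl

/-- Translation as an affine map. -/
def transAff (v : ℝ × ℝ) : (ℝ × ℝ) →ᵃ[ℝ] (ℝ × ℝ) where
  toFun x := x + v
  linear := LinearMap.id
  map_vadd' p w := by
    simp only [vadd_eq_add, LinearMap.id_coe, id_eq]
    abel

end Aux

/-- any `d`-minimal triangle is `G`-equivalent to a translate of `T₁`
by a vector of `L_d`, and the translate may be chosen inside the unit square. -/
theorem minimal_triangle_G_equiv_translate_of_T1 (d : ℕ) (hd : 0 < d) (p q r : ℝ × ℝ)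
    (h : IsMinimalTriangle d p q r) :
    ∃ (g : GMap) (v : ℝ × ℝ), v ∈ Ld d ∧
      g.app '' convexHull ℝ ({p, q, r} : Set (ℝ × ℝ)) = (fun x => x + v) '' T1 d ∧
      (fun x => x + v) '' T1 d ⊆ Set.Icc ((0 : ℝ), (0 : ℝ)) (1, 1) := by
  obtain ⟨hp, hq, hr, hncol, hmin⟩ := h
  obtain ⟨a1, a2, hpeq⟩ := hp
  obtain ⟨b1, b2, hqeq⟩ := hq
  obtain ⟨c1, c2, hreq⟩ := hr
  have hdr : (d : ℝ) ≠ 0 := Nat.cast_ne_zero.2 hd.ne'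
  have hdRpos : (0 : ℝ) < d := by exact_mod_cast hd
  set P : ℤ × ℤ := (a1, a2) with hP
  set u : ℤ × ℤ := (b1 - a1, b2 - a2) with hu
  set w : ℤ × ℤ := (c1 - a1, c2 - a2) with hw
  have hpP : p = pt d P := hpeq
  have hqP : q = pt d (P + u) := by
    rw [hqeq]
    simp only [pt, hP, hu, Prod.mk_add_mk, Prod.ext_iff]
    push_cast
    constructor <;> ring
  have hrP : r = pt d (P + w) := by
    rw [hreq]
    simp only [pt, hP, hw, Prod.mk_add_mk, Prod.ext_iff]
    push_cast
    constructor <;> ring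
  rw [hpP, hqP, hrP] at hncol hmin ⊢
  set D : ℤ := u.1 * w.2 - u.2 * w.1 with hDdef
  have hD : D ≠ 0 := fun h0 => hncol (collinear_of_det_zero hd P u w h0)
  have hDu : D = 1 ∨ D = -1 := det_unimodular hd P u w hmin hD
  have hDD : D * D = 1 := by rcases hDu with h | h <;> rw [h] <;> norm_num
  set m : ℤ := D * (w.2 * P.1 - w.1 * P.2) with hm
  set n : ℤ := D * (u.1 * P.2 - u.2 * P.1) with hn
  have hok : (D * w.2) * (D * u.1) - (-(D * w.1)) * (-(D * u.2)) = 1 ∨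
      (D * w.2) * (D * u.1) - (-(D * w.1)) * (-(D * u.2)) = -1 := by
    have hkey : (D * w.2) * (D * u.1) - (-(D * w.1)) * (-(D * u.2)) = D * D * D := by
      rw [hDdef]; ring
    rw [hkey, hDD, one_mul]
    exact hDu
  set g : GMap := GMap.mk (D * w.2) (-(D * w.1)) (-(D * u.2)) (D * u.1)
    (-(m / (d : ℤ))) (-(n / (d : ℤ))) hok with hg
  set t1 : ℤ := m % (d : ℤ) with ht1
  set t2 : ℤ := n % (d : ℤ) with ht2
  have happ : ∀ X : ℤ × ℤ, g.app (pt d X) =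
      pt d (D * (w.2 * X.1 - w.1 * X.2) + d * g.v1, D * (u.1 * X.2 - u.2 * X.1) + d * g.v2) := by
    intro X
    simp only [GMap.app, pt, hg, Prod.ext_iff]
    push_cast
    constructor <;> (field_simp; ring)
  have hgv1 : g.v1 = -(m / (d : ℤ)) := rfl
  have hgv2 : g.v2 = -(n / (d : ℤ)) := rfl
  have e0 : g.app (pt d P) = pt d (t1, t2) := by
    rw [happ P]
    apply congrArg (pt d)
    rw [Prod.ext_iff]
    constructor
    · show D * (w.2 * P.1 - w.1 * P.2) + d * g.v1 = t1
      rw [hgv1, ht1, Int.emod_def, hm]; ring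
    · show D * (u.1 * P.2 - u.2 * P.1) + d * g.v2 = t2
      rw [hgv2, ht2, Int.emod_def, hn]; ring
  have e1 : g.app (pt d (P + u)) = pt d (t1 + 1, t2) := by
    rw [happ (P + u)]
    apply congrArg (pt d)
    rw [Prod.ext_iff]
    constructor
    · show D * (w.2 * (P.1 + u.1) - w.1 * (P.2 + u.2)) + d * g.v1 = t1 + 1
      rw [hgv1, ht1, Int.emod_def, hm]
      linear_combination hDD
    · show D * (u.1 * (P.2 + u.2) - u.2 * (P.1 + u.1)) + d * g.v2 = t2
      rw [hgv2, ht2, Int.emod_def, hn]; ring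
  have e2 : g.app (pt d (P + w)) = pt d (t1, t2 + 1) := by
    rw [happ (P + w)]
    apply congrArg (pt d)
    rw [Prod.ext_iff]
    constructor
    · show D * (w.2 * (P.1 + w.1) - w.1 * (P.2 + w.2)) + d * g.v1 = t1
      rw [hgv1, ht1, Int.emod_def, hm]; ring
    · show D * (u.1 * (P.2 + w.2) - u.2 * (P.1 + w.1)) + d * g.v2 = t2 + 1
      rw [hgv2, ht2, Int.emod_def, hn]
      linear_combination hDD
  set v : ℝ × ℝ := pt d (t1, t2) with hv
  have hvL : v ∈ Ld d := pt_mem_Ld d _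
  have ht1a : 0 ≤ t1 := Int.emod_nonneg m (by exact_mod_cast hd.ne')
  have ht1b : t1 < (d : ℤ) := Int.emod_lt_of_pos m (by exact_mod_cast hd)
  have ht2a : 0 ≤ t2 := Int.emod_nonneg n (by exact_mod_cast hd.ne')
  have ht2b : t2 < (d : ℤ) := Int.emod_lt_of_pos n (by exact_mod_cast hd)
  have hv0 : ((0 : ℝ), (0 : ℝ)) + v = pt d (t1, t2) := by
    rw [hv]; simp [pt]
  have hv1 : ((1 : ℝ) / d, (0 : ℝ)) + v = pt d (t1 + 1, t2) := by
    rw [hv]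
    simp only [pt, Prod.mk_add_mk, Prod.ext_iff]
    push_cast
    constructor
    · rw [← add_div, add_comm]
    · rw [zero_add]
  have hv2 : ((0 : ℝ), (1 : ℝ) / d) + v = pt d (t1, t2 + 1) := by
    rw [hv]
    simp only [pt, Prod.mk_add_mk, Prod.ext_iff]
    push_cast
    constructor
    · rw [zero_add]
    · rw [← add_div, add_comm]
  have htrans : (fun x : ℝ × ℝ => x + v) = ⇑(transAff v) := rfl
  refine ⟨g, v, hvL, ?_, ?_⟩
  · rw [gmap_app_eq_aff, AffineMap.image_convexHull, htrans, T1, AffineMap.image_convexHull]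
    congr 1
    rw [Set.image_insert_eq, Set.image_insert_eq, Set.image_singleton,
      Set.image_insert_eq, Set.image_insert_eq, Set.image_singleton]
    have cg0 : g.aff (pt d P) = pt d (t1, t2) := e0
    have cg1 : g.aff (pt d (P + u)) = pt d (t1 + 1, t2) := e1
    have cg2 : g.aff (pt d (P + w)) = pt d (t1, t2 + 1) := e2
    have ct0 : transAff v ((0 : ℝ), (0 : ℝ)) = pt d (t1, t2) := hv0
    have ct1 : transAff v ((1 : ℝ) / d, (0 : ℝ)) = pt d (t1 + 1, t2) := hv1
    have ct2 : transAff v ((0 : ℝ), (1 : ℝ) / d) = pt d (t1, t2 + 1) := hv2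
    rw [cg0, cg1, cg2, ct0, ct1, ct2]
  · rw [htrans, T1, AffineMap.image_convexHull]
    apply convexHull_min ?_ (convex_Icc _ _)
    rw [Set.image_insert_eq, Set.image_insert_eq, Set.image_singleton]
    have hb1 : ((t1 : ℝ) + 1) / d ≤ 1 := by
      rw [div_le_one hdRpos]
      have : (t1 : ℝ) + 1 ≤ d := by exact_mod_cast ht1b
      linarith
    have hb2 : ((t2 : ℝ) + 1) / d ≤ 1 := by
      rw [div_le_one hdRpos]
      have : (t2 : ℝ) + 1 ≤ d := by exact_mod_cast ht2b
      linarith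
    have ha1 : (0 : ℝ) ≤ (t1 : ℝ) / d := by
      apply div_nonneg _ hdRpos.le; exact_mod_cast ht1a
    have ha2 : (0 : ℝ) ≤ (t2 : ℝ) / d := by
      apply div_nonneg _ hdRpos.le; exact_mod_cast ht2a
    have ht1R : (0 : ℝ) ≤ (t1 : ℝ) := by exact_mod_cast ht1a
    have ht2R : (0 : ℝ) ≤ (t2 : ℝ) := by exact_mod_cast ht2a
    have hc1' : (t1 : ℝ) / d ≤ 1 := by
      rw [div_le_one hdRpos]
      have : (t1 : ℝ) < d := by exact_mod_cast ht1b
      linarith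
    have hc2' : (t2 : ℝ) / d ≤ 1 := by
      rw [div_le_one hdRpos]
      have : (t2 : ℝ) < d := by exact_mod_cast ht2b
      linarith
    have ct0 : transAff v ((0 : ℝ), (0 : ℝ)) = pt d (t1, t2) := hv0
    have ct1 : transAff v ((1 : ℝ) / d, (0 : ℝ)) = pt d (t1 + 1, t2) := hv1
    have ct2 : transAff v ((0 : ℝ), (1 : ℝ) / d) = pt d (t1, t2 + 1) := hv2
    intro x hx
    simp only [Set.mem_insert_iff, Set.mem_singleton_iff] at hx
    rcases hx with rfl | rfl | rfl
    · rw [ct0]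
      refine Set.mem_Icc.2 ⟨Prod.mk_le_mk.2 ⟨ha1, ha2⟩, Prod.mk_le_mk.2 ⟨hc1', hc2'⟩⟩
    · rw [ct1]
      refine Set.mem_Icc.2 ⟨Prod.mk_le_mk.2 ⟨?_, ha2⟩, Prod.mk_le_mk.2 ⟨?_, hc2'⟩⟩
      · show (0 : ℝ) ≤ ((t1 + 1 : ℤ) : ℝ) / d
        apply div_nonneg _ hdRpos.le
        push_cast; linarith
      · show ((t1 + 1 : ℤ) : ℝ) / d ≤ 1
        push_cast; exact hb1
    · rw [ct2]
      refine Set.mem_Icc.2 ⟨Prod.mk_le_mk.2 ⟨ha1, ?_⟩, Prod.mk_le_mk.2 ⟨hc1', ?_⟩⟩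
      · show (0 : ℝ) ≤ ((t2 + 1 : ℤ) : ℝ) / d
        apply div_nonneg _ hdRpos.le
        push_cast; linarith
      · show ((t2 + 1 : ℤ) : ℝ) / d ≤ 1
        push_cast; exact hb2
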